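/- Let ξ : ℝ → ℂ be twice differentiable with 0 < |ξ(t)| < 1 for all t, satisfying the geodesic equation ξ''(t) = (conj(ξ(t))/(1 − |ξ(t)|²) + 3·conj(ξ(t))/(1 + |ξ(t)|²))·(ξ'(t))², and suppose Im(conj(ξ(0))·ξ'(0)) ≠ 0. Then there exist a, b with 0 < a ≤ b < 1 such that a ≤ |ξ(t)| ≤ b for all t ∈ ℝ. -/

import Mathlib

private lemma hasDerivAt_conjmul_re (f g : ℝ → ℂ) (f' g' : ℂ) (t : ℝ)
    (hf : HasDerivAt f f' t) (hg : HasDerivAt g g' t) :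
    HasDerivAt (fun s => ((starRingEnd ℂ) (f s) * g s).re)
      ((starRingEnd ℂ) f' * g t + (starRingEnd ℂ) (f t) * g').re t := by
  have h := Complex.reCLM.hasFDerivAt.comp_hasDerivAt t ((hf.star).mul hg)
  simp only [Function.comp_def, Complex.reCLM_apply] at h
  exact h

private lemma hasDerivAt_conjmul_im (f g : ℝ → ℂ) (f' g' : ℂ) (t : ℝ)
    (hf : HasDerivAt f f' t) (hg : HasDerivAt g g' t) :
    HasDerivAt (fun s => ((starRingEnd ℂ) (f s) * g s).im)
      ((starRingEnd ℂ) f' * g t + (starRingEnd ℂ) (f t) * g').im t := by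
  have h := Complex.imCLM.hasFDerivAt.comp_hasDerivAt t ((hf.star).mul hg)
  simp only [Function.comp_def, Complex.imCLM_apply] at h
  exact h

/-- Oscillation of geodesics with nonzero angular momentum on the twisting holomorphic
sphere: a geodesic `ξ` with `0 < |ξ| < 1` and `Im(ξ̄(0)ξ'(0)) ≠ 0` stays at a bounded
distance strictly between the pole and the lagrangian circle. -/
theorem geodesic_oscillation (ξ ξ' ξ'' : ℝ → ℂ)
    (hξ : ∀ t : ℝ, HasDerivAt ξ (ξ' t) t)
    (hξ' : ∀ t : ℝ, HasDerivAt ξ' (ξ'' t) t)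
    (hrange : ∀ t : ℝ, 0 < ‖ξ t‖ ∧ ‖ξ t‖ < 1)
    (hgeo : ∀ t : ℝ, ξ'' t =
      ((starRingEnd ℂ) (ξ t) / (1 - ((‖ξ t‖ : ℝ) : ℂ) ^ 2) +
        3 * (starRingEnd ℂ) (ξ t) / (1 + ((‖ξ t‖ : ℝ) : ℂ) ^ 2)) * (ξ' t) ^ 2)
    (hI₂ : ((starRingEnd ℂ) (ξ 0) * ξ' 0).im ≠ 0) :
    ∃ a b : ℝ, 0 < a ∧ a ≤ b ∧ b < 1 ∧
      ∀ t : ℝ, a ≤ ‖ξ t‖ ∧ ‖ξ t‖ ≤ b := by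
  set u : ℝ → ℝ := fun t => Complex.normSq (ξ t) with hu_def
  set A : ℝ → ℝ := fun t => ((starRingEnd ℂ) (ξ t) * ξ' t).re with hA_def
  set B : ℝ → ℝ := fun t => ((starRingEnd ℂ) (ξ t) * ξ' t).im with hB_def
  set N : ℝ → ℝ := fun t => Complex.normSq (ξ' t) with hN_def
  set K : ℝ → ℝ := fun t => 1 / (1 - u t) + 3 / (1 + u t) with hK_def
  set G : ℝ → ℝ := fun t => (1 - u t) / (1 + u t) ^ 3 with hG_def
  have hu0 : ∀ t, 0 < u t := fun t =>
    Complex.normSq_pos.mpr (norm_pos_iff.mp (hrange t).1)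
  have hu1 : ∀ t, u t < 1 := by
    intro t
    have h1 := (hrange t).1
    have h2 := (hrange t).2
    have : ‖ξ t‖ ^ 2 < 1 := by nlinarith
    simpa [hu_def, Complex.sq_norm] using this
  have h1u : ∀ t, (0:ℝ) < 1 - u t := fun t => by linarith [hu1 t]
  have h1u' : ∀ t, (0:ℝ) < 1 + u t := fun t => by linarith [hu0 t]
  have h1une : ∀ t, (1:ℝ) - u t ≠ 0 := fun t => ne_of_gt (h1u t)
  have h1u'ne : ∀ t, (1:ℝ) + u t ≠ 0 := fun t => ne_of_gt (h1u' t)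
  -- derivative of u
  have hu' : ∀ t, HasDerivAt u (2 * A t) t := by
    intro t
    have h := hasDerivAt_conjmul_re ξ ξ (ξ' t) (ξ' t) t (hξ t) (hξ t)
    have e1 : (fun s => ((starRingEnd ℂ) (ξ s) * ξ s).re) = u := by
      funext s; simp [hu_def, Complex.mul_re, Complex.normSq_apply]
    have e2 : ((starRingEnd ℂ) (ξ' t) * ξ t + (starRingEnd ℂ) (ξ t) * ξ' t).re = 2 * A t := by
      simp [hA_def, Complex.mul_re]; ring
    rw [e1, e2] at h
    exact h
  -- derivative of N
  have hN' : ∀ t, HasDerivAt N (2 * ((starRingEnd ℂ) (ξ' t) * ξ'' t).re) t := by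
    intro t
    have h := hasDerivAt_conjmul_re ξ' ξ' (ξ'' t) (ξ'' t) t (hξ' t) (hξ' t)
    have e1 : (fun s => ((starRingEnd ℂ) (ξ' s) * ξ' s).re) = N := by
      funext s; simp [hN_def, Complex.mul_re, Complex.normSq_apply]
    have e2 : ((starRingEnd ℂ) (ξ'' t) * ξ' t + (starRingEnd ℂ) (ξ' t) * ξ'' t).re
        = 2 * ((starRingEnd ℂ) (ξ' t) * ξ'' t).re := by
      simp [Complex.mul_re]; ring
    rw [e1, e2] at h
    exact h
  -- derivative of B
  have hB' : ∀ t, HasDerivAt B (((starRingEnd ℂ) (ξ t) * ξ'' t).im) t := by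
    intro t
    have h := hasDerivAt_conjmul_im ξ ξ' (ξ' t) (ξ'' t) t (hξ t) (hξ' t)
    have e2 : ((starRingEnd ℂ) (ξ' t) * ξ' t + (starRingEnd ℂ) (ξ t) * ξ'' t).im
        = ((starRingEnd ℂ) (ξ t) * ξ'' t).im := by
      simp [Complex.mul_im]; ring
    rw [e2] at h
    exact h
  -- rewrite abs^2 as normSq in the geodesic equation
  have habs : ∀ t, ((‖ξ t‖ : ℝ) : ℂ) ^ 2 = ((u t : ℝ) : ℂ) := by
    intro t
    rw [← Complex.ofReal_pow, Complex.sq_norm]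
  have hcne1 : ∀ t, (1:ℂ) - ((u t : ℝ) : ℂ) ≠ 0 := by
    intro t
    rw [show (1:ℂ) - ((u t:ℝ):ℂ) = ((1 - u t : ℝ):ℂ) by push_cast; ring]
    exact Complex.ofReal_ne_zero.mpr (h1une t)
  have hcne2 : ∀ t, (1:ℂ) + ((u t : ℝ) : ℂ) ≠ 0 := by
    intro t
    rw [show (1:ℂ) + ((u t:ℝ):ℂ) = ((1 + u t : ℝ):ℂ) by push_cast; ring]
    exact Complex.ofReal_ne_zero.mpr (h1u'ne t)
  -- key complex identities from the geodesic equation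
  have hkey1 : ∀ t, (starRingEnd ℂ) (ξ t) * ξ'' t
      = ((K t : ℝ) : ℂ) * ((starRingEnd ℂ) (ξ t) * ξ' t) ^ 2 := by
    intro t
    rw [hgeo t, habs t, hK_def]
    have h1 := hcne1 t
    have h2 := hcne2 t
    push_cast
    field_simp
  have hkey2 : ∀ t, (starRingEnd ℂ) (ξ' t) * ξ'' t
      = ((K t : ℝ) : ℂ) * (((N t : ℝ) : ℂ) * ((starRingEnd ℂ) (ξ t) * ξ' t)) := by
    intro t
    rw [hgeo t, habs t, hK_def, hN_def]
    have h1 := hcne1 t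
    have h2 := hcne2 t
    have h3 : ((Complex.normSq (ξ' t) : ℝ) : ℂ) = (starRingEnd ℂ) (ξ' t) * ξ' t := by
      rw [mul_comm, Complex.mul_conj]
    rw [h3]
    push_cast
    field_simp
  -- real consequences
  have him : ∀ t, ((starRingEnd ℂ) (ξ t) * ξ'' t).im = K t * (2 * A t * B t) := by
    intro t
    rw [hkey1 t]
    simp only [pow_two, Complex.mul_im, Complex.mul_re, Complex.ofReal_re, Complex.ofReal_im,
      hA_def, hB_def]
    ring
  have hre : ∀ t, ((starRingEnd ℂ) (ξ' t) * ξ'' t).re = K t * (N t * A t) := by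
    intro t
    rw [hkey2 t, ← mul_assoc, ← Complex.ofReal_mul]
    simp only [Complex.mul_re, Complex.ofReal_re, Complex.ofReal_im, hA_def]
    ring
  -- derivative of G
  have hG' : ∀ t, HasDerivAt G
      ((-(2 * A t) * (1 + u t) ^ 3 - (1 - u t) * (3 * (1 + u t) ^ 2 * (2 * A t))) / ((1 + u t) ^ 3) ^ 2) t := by
    intro t
    have hn : HasDerivAt (fun s => 1 - u s) (-(2 * A t)) t := by
      exact ((hasDerivAt_const t (1:ℝ)).sub (hu' t)).congr_deriv (by ring)
    have hd : HasDerivAt (fun s => (1 + u s) ^ 3) (3 * (1 + u t) ^ 2 * (2 * A t)) t := by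
      have h := ((hasDerivAt_const t (1:ℝ)).add (hu' t)).pow 3
      exact h.congr_deriv (by norm_num)
    have hne : (1 + u t) ^ 3 ≠ 0 := pow_ne_zero 3 (h1u'ne t)
    exact hn.div hd hne
  -- conserved quantities: derivatives vanish
  have hI₂' : ∀ t, HasDerivAt (fun s => G s * B s) 0 t := by
    intro t
    have hBd : HasDerivAt B (K t * (2 * A t * B t)) t := by
      have := hB' t; rwa [him t] at this
    have h := (hG' t).mul hBd
    have e : (-(2 * A t) * (1 + u t) ^ 3 - (1 - u t) * (3 * (1 + u t) ^ 2 * (2 * A t))) / ((1 + u t) ^ 3) ^ 2 * B t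
        + G t * (K t * (2 * A t * B t)) = 0 := by
      rw [hG_def, hK_def]
      have h1 := h1une t
      have h2 := h1u'ne t
      field_simp
      ring
    rwa [e] at h
  have hI₁' : ∀ t, HasDerivAt (fun s => G s * N s) 0 t := by
    intro t
    have hNd : HasDerivAt N (2 * (K t * (N t * A t))) t := by
      have := hN' t; rwa [hre t] at this
    have h := (hG' t).mul hNd
    have e : (-(2 * A t) * (1 + u t) ^ 3 - (1 - u t) * (3 * (1 + u t) ^ 2 * (2 * A t))) / ((1 + u t) ^ 3) ^ 2 * N t
        + G t * (2 * (K t * (N t * A t))) = 0 := by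
      rw [hG_def, hK_def]
      have h1 := h1une t
      have h2 := h1u'ne t
      field_simp
      ring
    rwa [e] at h
  have hI₂c : ∀ t, G t * B t = G 0 * B 0 := fun t =>
    is_const_of_deriv_eq_zero (fun s => (hI₂' s).differentiableAt)
      (fun s => (hI₂' s).deriv) t 0
  have hI₁c : ∀ t, G t * N t = G 0 * N 0 := fun t =>
    is_const_of_deriv_eq_zero (fun s => (hI₁' s).differentiableAt)
      (fun s => (hI₁' s).deriv) t 0
  -- positivity facts
  have hGpos : ∀ t, 0 < G t := by
    intro t
    rw [hG_def]
    exact div_pos (h1u t) (pow_pos (h1u' t) 3)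
  have hB0 : B 0 ≠ 0 := hI₂
  have hN0 : 0 < N 0 := by
    rw [hN_def]
    refine Complex.normSq_pos.mpr (fun h => hB0 ?_)
    simp [hB_def, h]
  have hI₁pos : 0 < G 0 * N 0 := mul_pos (hGpos 0) hN0
  set c : ℝ := (G 0 * B 0) ^ 2 / (G 0 * N 0) with hc_def
  have hcpos : 0 < c := by
    apply div_pos _ hI₁pos
    have : G 0 * B 0 ≠ 0 := mul_ne_zero (ne_of_gt (hGpos 0)) hB0
    positivity
  -- the main pointwise bound: c ≤ u t * G t
  have hmain : ∀ t, c ≤ u t * G t := by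
    intro t
    have h1 : (B t) ^ 2 ≤ u t * N t := by
      have h2 : (A t) ^ 2 + (B t) ^ 2 = u t * N t := by
        have := Complex.normSq_mul ((starRingEnd ℂ) (ξ t)) (ξ' t)
        rw [Complex.normSq_conj] at this
        simpa [hA_def, hB_def, hu_def, hN_def, Complex.normSq_apply, pow_two] using this
      nlinarith [sq_nonneg (A t)]
    have h2 : (G 0 * B 0) ^ 2 ≤ (u t * G t) * (G 0 * N 0) := by
      calc (G 0 * B 0) ^ 2 = (G t * B t) ^ 2 := by rw [hI₂c t]
        _ = G t ^ 2 * B t ^ 2 := by ring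
        _ ≤ G t ^ 2 * (u t * N t) := by
            exact mul_le_mul_of_nonneg_left h1 (sq_nonneg (G t))
        _ = (u t * G t) * (G t * N t) := by ring
        _ = (u t * G t) * (G 0 * N 0) := by rw [hI₁c t]
    rw [hc_def, div_le_iff₀ hI₁pos]
    exact h2
  -- bounds on u
  have hGle : ∀ t, G t ≤ 1 - u t := by
    intro t
    rw [hG_def]
    have h3 : (1:ℝ) ≤ (1 + u t) ^ 3 := by nlinarith [hu0 t, mul_pos (hu0 t) (hu0 t), mul_pos (mul_pos (hu0 t) (hu0 t)) (hu0 t)]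
    exact div_le_self (le_of_lt (h1u t)) h3
  have hlb : ∀ t, c ≤ u t := by
    intro t
    have h1 := hmain t
    have h2 : u t * G t ≤ u t := by
      have := hGle t
      nlinarith [hu0 t, hu1 t]
    linarith
  have hub : ∀ t, u t ≤ 1 - c := by
    intro t
    have h1 := hmain t
    have h2 : u t * G t ≤ 1 - u t := by
      have := hGle t
      nlinarith [hu0 t, hu1 t]
    linarith
  -- conclusion
  refine ⟨Real.sqrt c, Real.sqrt (1 - c), Real.sqrt_pos.mpr hcpos, ?_, ?_, ?_⟩
  · apply Real.sqrt_le_sqrt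
    linarith [hlb 0, hub 0]
  · refine (Real.sqrt_lt' one_pos).mpr ?_
    nlinarith
  · intro t
    have habs' : ‖ξ t‖ = Real.sqrt (u t) := by
      rw [hu_def, Complex.norm_def]
    constructor
    · rw [habs']
      exact Real.sqrt_le_sqrt (hlb t)
    · rw [habs']
      exact Real.sqrt_le_sqrt (hub t)
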